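/- For every natural number k, every real λ, and every real y with k·|λy| < 1 and |λy| < 1, one has Σ_{n=0}^∞ S_2(n,k) T_n(y) = (1/k!) Σ_{j=0}^k C(k,j) (−1)^{k−j} F_j(y), where F_j(y) = (e_λ(jy) − e_λ(y))/(j − 1) for j ≠ 1 and F_1(y) = (y/(1+λy)) e_λ(y) (the limiting value at j = 1), S_2(n,k) denotes the Stirling numbers of the second kind, and the series on the left converges. -/

import Mathlib

noncomputable section

/-- Generalized falling factorial `(x)_{n,λ} = x(x-λ)⋯(x-(n-1)λ)`, with `(x)_{0,λ} = 1`. -/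
def dff (lam x : ℝ) (n : ℕ) : ℝ := ∏ i ∈ Finset.range n, (x - i * lam)

/-- Degenerate exponential `e_λ(y) = ∑_{n=0}^∞ (1)_{n,λ} y^n / n!`. -/
def dexp (lam y : ℝ) : ℝ := ∑' n : ℕ, dff lam 1 n * y ^ n / n.factorial

/-- Truncated degenerate exponential tail
`T_n(y) = e_λ(y) - ∑_{k=0}^n (1)_{k,λ} y^k / k!`. -/
def dtail (lam y : ℝ) (n : ℕ) : ℝ :=
  dexp lam y - ∑ k ∈ Finset.range (n + 1), dff lam 1 k * y ^ k / k.factorial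

/-- Stirling number of the second kind, as a real number:
`S_2(n,k) = (1/k!) ∑_{j=0}^k (-1)^{k-j} C(k,j) j^n`. -/
def stirling2 (n k : ℕ) : ℝ :=
  (1 / (k.factorial : ℝ)) *
    ∑ j ∈ Finset.range (k + 1), (-1 : ℝ) ^ (k - j) * (k.choose j : ℝ) * (j : ℝ) ^ n

open Filter Finset Topology


lemma dff_one_succ (lam : ℝ) (M : ℕ) :
    dff lam 1 (M + 1) = dff lam 1 M * (1 - M * lam) :=
  Finset.prod_range_succ _ _

lemma workhorse (lam z : ℝ) (hz : |lam * z| < 1) :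
    Summable (fun M : ℕ => ((M : ℝ) + 1) * |dff lam 1 M| * |z| ^ M / M.factorial) := by
  set f : ℕ → ℝ := fun M => ((M : ℝ) + 1) * |dff lam 1 M| * |z| ^ M / M.factorial with hf
  set g : ℕ → ℝ := fun M => (((M : ℝ) + 2) / ((M : ℝ) + 1)) * (|1 - M * lam| / ((M : ℝ) + 1)) * |z|
    with hg
  have hfs : ∀ M, f (M + 1) = g M * f M := by
    intro M
    have h1 : |dff lam 1 (M + 1)| = |dff lam 1 M| * |1 - M * lam| := by
      rw [dff_one_succ, abs_mul]
    have h2 : ((M : ℝ) + 1) ≠ 0 := by positivity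
    have h3 : ((M.factorial : ℝ)) ≠ 0 := by positivity
    simp only [hf, hg, h1, Nat.factorial_succ, Nat.cast_mul, pow_succ]
    push_cast
    field_simp
    ring
  have tg : Tendsto g atTop (𝓝 (1 * |lam| * |z|)) := by
    have t0 : Tendsto (fun M : ℕ => (1 : ℝ) / ((M : ℝ) + 1)) atTop (𝓝 0) :=
      tendsto_one_div_add_atTop_nhds_zero_nat
    have t1 : Tendsto (fun M : ℕ => ((M : ℝ) + 2) / ((M : ℝ) + 1)) atTop (𝓝 1) := by
      have := t0.const_add (1 : ℝ)
      rw [add_zero] at this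
      refine this.congr fun M => ?_
      have h2 : ((M : ℝ) + 1) ≠ 0 := by positivity
      field_simp
      ring
    have t2 : Tendsto (fun M : ℕ => |1 - M * lam| / ((M : ℝ) + 1)) atTop (𝓝 |lam|) := by
      have h : Tendsto (fun M : ℕ => (1 + lam) * ((1 : ℝ) / ((M : ℝ) + 1)) - lam) atTop
          (𝓝 ((1 + lam) * 0 - lam)) := (t0.const_mul _).sub_const lam
      rw [mul_zero, zero_sub] at h
      have h' := h.abs
      rw [abs_neg] at h'
      refine h'.congr fun M => ?_
      have h2 : (0 : ℝ) < (M : ℝ) + 1 := by positivity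
      have harg : (1 + lam) * ((1:ℝ) / ((M : ℝ) + 1)) - lam = (1 - M * lam) / ((M : ℝ) + 1) := by
        field_simp
        ring
      rw [harg, abs_div, abs_of_pos h2]
    exact (t1.mul t2).mul_const _
  rw [one_mul, ← abs_mul] at tg
  have hev : ∀ᶠ M in atTop, g M < (|lam * z| + 1) / 2 := tg.eventually_lt_const (by linarith)
  apply summable_of_ratio_norm_eventually_le (r := (|lam * z| + 1) / 2) (by linarith)
  filter_upwards [hev] with M hM
  have hfnn : 0 ≤ f M := by positivity
  have hgnn : 0 ≤ g M := by
    simp only [hg]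
    positivity
  rw [Real.norm_eq_abs, Real.norm_eq_abs, abs_of_nonneg hfnn, abs_of_nonneg (by positivity : (0:ℝ) ≤ f (M+1)), hfs]
  exact mul_le_mul_of_nonneg_right (le_of_lt hM) hfnn

lemma summable_dexp (lam z : ℝ) (hz : |lam * z| < 1) :
    Summable (fun M : ℕ => dff lam 1 M * z ^ M / M.factorial) := by
  apply Summable.of_abs
  apply Summable.of_nonneg_of_le (fun M => abs_nonneg _) _ (workhorse lam z hz)
  intro M
  rw [abs_div, abs_mul, abs_pow, Nat.abs_cast]
  have h0 : (0 : ℝ) < M.factorial := by positivity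
  refine div_le_div_of_nonneg_right ?_ (le_of_lt h0)
  nlinarith [abs_nonneg (dff lam 1 M), pow_nonneg (abs_nonneg z) M,
    mul_nonneg (abs_nonneg (dff lam 1 M)) (pow_nonneg (abs_nonneg z) M)]

lemma hasSum_dexp (lam z : ℝ) (hz : |lam * z| < 1) :
    HasSum (fun M : ℕ => dff lam 1 M * z ^ M / M.factorial) (dexp lam z) :=
  (summable_dexp lam z hz).hasSum

lemma hasSum_dtail (lam y : ℝ) (hy : |lam * y| < 1) (n : ℕ) :
    HasSum (fun m : ℕ => dff lam 1 (m + (n + 1)) * y ^ (m + (n + 1)) / (m + (n + 1)).factorial)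
      (dtail lam y n) :=
  (hasSum_nat_add_iff' (f := fun M => dff lam 1 M * y ^ M / M.factorial) (n + 1)).mpr
    (hasSum_dexp lam y hy)

def aa (lam y : ℝ) (M : ℕ) : ℝ := dff lam 1 M * y ^ M / M.factorial

lemma hasSum_aa (lam z : ℝ) (hz : |lam * z| < 1) : HasSum (aa lam z) (dexp lam z) :=
  hasSum_dexp lam z hz

lemma hasSum_dtail' (lam y : ℝ) (hy : |lam * y| < 1) (n : ℕ) :
    HasSum (fun m : ℕ => aa lam y (m + (n + 1))) (dtail lam y n) :=
  hasSum_dtail lam y hy n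

lemma abs_aa (lam y : ℝ) (M : ℕ) :
    |aa lam y M| = |dff lam 1 M| * |y| ^ M / M.factorial := by
  rw [aa, abs_div, abs_mul, abs_pow, Nat.abs_cast]

lemma HasSum.congr' {ι : Type*} {f g : ι → ℝ} {a : ℝ} (hf : HasSum f a)
    (h : ∀ n, f n = g n) : HasSum g a := (funext h : f = g) ▸ hf

lemma fiber_sum (g : ℕ → ℝ) (j : ℕ) (N : ℕ) :
    ∑ p ∈ Finset.HasAntidiagonal.antidiagonal N, (j : ℝ) ^ p.1 * g (p.2 + (p.1 + 1))
      = g (N + 1) * ∑ n ∈ Finset.range (N + 1), (j : ℝ) ^ n := by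
  rw [Finset.Nat.sum_antidiagonal_eq_sum_range_succ_mk, Finset.mul_sum]
  apply Finset.sum_congr rfl
  intro n hn
  have h : N - n + (n + 1) = N + 1 := by
    have := Finset.mem_range.mp hn; omega
  rw [h]; ring

lemma workhorse_shift (lam z : ℝ) (hz : |lam * z| < 1) :
    Summable (fun N : ℕ =>
      ((N : ℝ) + 1 + 1) * |dff lam 1 (N + 1)| * |z| ^ (N + 1) / (N + 1).factorial) := by
  have h := (summable_nat_add_iff
    (f := fun M : ℕ => ((M : ℝ) + 1) * |dff lam 1 M| * |z| ^ M / M.factorial) 1).mpr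
    (workhorse lam z hz)
  refine h.congr fun N => ?_
  push_cast
  ring_nf

lemma hasSum_c (lam y : ℝ) (j : ℕ) (hj : |lam * ((j : ℝ) * y)| < 1) (hy : |lam * y| < 1) :
    HasSum (fun N : ℕ => aa lam y (N + 1) * ∑ n ∈ Finset.range (N + 1), (j : ℝ) ^ n)
      (if j = 1 then y / (1 + lam * y) * dexp lam y
       else (dexp lam ((j : ℝ) * y) - dexp lam y) / ((j : ℝ) - 1)) := by
  by_cases hj1 : j = 1
  · subst hj1
    rw [if_pos rfl]
    -- sum of N * aa N
    have hNsummable : Summable (fun M : ℕ => (M : ℝ) * aa lam y M) := by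
      apply Summable.of_abs
      apply Summable.of_nonneg_of_le (fun M => abs_nonneg _) _ (workhorse lam y hy)
      intro M
      rw [abs_mul, Nat.abs_cast, abs_aa, mul_div_assoc']
      have h0 : (0 : ℝ) < M.factorial := by positivity
      refine div_le_div_of_nonneg_right ?_ (le_of_lt h0)
      nlinarith [abs_nonneg (dff lam 1 M), pow_nonneg (abs_nonneg y) M,
        mul_nonneg (abs_nonneg (dff lam 1 M)) (pow_nonneg (abs_nonneg y) M)]
    set B := ∑' M : ℕ, (M : ℝ) * aa lam y M with hBdef
    have hB : HasSum (fun M : ℕ => (M : ℝ) * aa lam y M) B := hNsummable.hasSum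
    have hA : HasSum (aa lam y) (dexp lam y) := hasSum_aa lam y hy
    have hshift : HasSum (fun N : ℕ => ((N : ℝ) + 1) * aa lam y (N + 1)) B := by
      have h := (hasSum_nat_add_iff' (f := fun M : ℕ => (M : ℝ) * aa lam y M) 1).mpr hB
      simp only [Finset.range_one, Finset.sum_singleton, Nat.cast_zero, zero_mul,
        sub_zero] at h
      refine h.congr' fun N => ?_
      push_cast
      ring
    have hid : ∀ N : ℕ, y * aa lam y N - lam * y * ((N : ℝ) * aa lam y N)
        = ((N : ℝ) + 1) * aa lam y (N + 1) := by
      intro N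
      have h3 : ((N.factorial : ℝ)) ≠ 0 := by positivity
      have h4 : ((N : ℝ) + 1) ≠ 0 := by positivity
      simp only [aa, dff_one_succ, Nat.factorial_succ, Nat.cast_mul, pow_succ]
      push_cast
      field_simp
    have hRHS : HasSum (fun N : ℕ => y * aa lam y N - lam * y * ((N : ℝ) * aa lam y N))
        (y * dexp lam y - lam * y * B) := (hA.mul_left y).sub (hB.mul_left (lam * y))
    have hRHS' : HasSum (fun N : ℕ => ((N : ℝ) + 1) * aa lam y (N + 1))
        (y * dexp lam y - lam * y * B) := hRHS.congr' hid
    have hBeq : B = y * dexp lam y - lam * y * B := hshift.unique hRHS'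
    have hne : 1 + lam * y ≠ 0 := by
      have := (abs_lt.mp hy).1
      intro h; linarith
    have hBval : B = y / (1 + lam * y) * dexp lam y := by
      rw [div_mul_eq_mul_div, eq_div_iff hne]
      linear_combination hBeq
    rw [← hBval]
    refine hshift.congr' fun N => ?_
    simp only [Nat.cast_one, one_pow, Finset.sum_const, Finset.card_range, nsmul_eq_mul, mul_one]
    push_cast
    ring
  · rw [if_neg hj1]
    have hjR : (j : ℝ) ≠ 1 := by exact_mod_cast hj1
    have hA : HasSum (fun M : ℕ => aa lam y M * (j : ℝ) ^ M) (dexp lam ((j : ℝ) * y)) := by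
      have h := hasSum_dexp lam ((j : ℝ) * y) hj
      refine h.congr' fun M => ?_
      simp only [aa, mul_pow]
      ring
    have hB : HasSum (aa lam y) (dexp lam y) := hasSum_aa lam y hy
    have hsub : HasSum (fun M : ℕ => aa lam y M * (j : ℝ) ^ M - aa lam y M)
        (dexp lam ((j : ℝ) * y) - dexp lam y) := hA.sub hB
    have hshift := (hasSum_nat_add_iff'
      (f := fun M : ℕ => aa lam y M * (j : ℝ) ^ M - aa lam y M) 1).mpr hsub
    simp only [Finset.range_one, Finset.sum_singleton, pow_zero, mul_one, sub_self,
      sub_zero] at hshift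
    have hdiv := hshift.div_const ((j : ℝ) - 1)
    refine hdiv.congr' fun N => ?_
    rw [geom_sum_eq hjR]
    have h5 : (j : ℝ) - 1 ≠ 0 := sub_ne_zero.mpr hjR
    field_simp

lemma inner_hasSum (lam y : ℝ) (j : ℕ) (hj : |lam * ((j : ℝ) * y)| < 1)
    (hy : |lam * y| < 1) :
    HasSum (fun n : ℕ => (j : ℝ) ^ n * dtail lam y n)
      (if j = 1 then y / (1 + lam * y) * dexp lam y
       else (dexp lam ((j : ℝ) * y) - dexp lam y) / ((j : ℝ) - 1)) := by
  set F : ℕ × ℕ → ℝ := fun p => (j : ℝ) ^ p.1 * aa lam y (p.2 + (p.1 + 1)) with hFdef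
  have hgb : ∀ N : ℕ, ∑ n ∈ Finset.range (N + 1), (j : ℝ) ^ n
      ≤ ((N : ℝ) + 1) * ((j : ℝ) ^ (N + 1) + 1) := by
    intro N
    calc ∑ n ∈ Finset.range (N + 1), (j : ℝ) ^ n
        ≤ ∑ _n ∈ Finset.range (N + 1), ((j : ℝ) ^ (N + 1) + 1) := by
          apply Finset.sum_le_sum
          intro n hn
          rcases eq_or_ne j 0 with h0 | h0
          · subst h0
            push_cast
            have h1 : (0 : ℝ) ^ n ≤ 1 := pow_le_one₀ le_rfl zero_le_one
            have h2 : (0 : ℝ) ≤ (0 : ℝ) ^ (N + 1) := by positivity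
            linarith
          · have h1 : (1 : ℝ) ≤ (j : ℝ) := by
              exact_mod_cast Nat.one_le_iff_ne_zero.mpr h0
            have h2 := pow_le_pow_right₀ h1 (show n ≤ N + 1 from by have := Finset.mem_range.mp hn; omega)
            linarith
      _ = ((N : ℝ) + 1) * ((j : ℝ) ^ (N + 1) + 1) := by
          rw [Finset.sum_const, Finset.card_range, nsmul_eq_mul]
          push_cast
          ring
  have hFabs : ∀ p : ℕ × ℕ, |F p| = (j : ℝ) ^ p.1 * |aa lam y (p.2 + (p.1 + 1))| := by
    intro p
    rw [hFdef]
    simp only []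
    rw [abs_mul, abs_pow, Nat.abs_cast]
  have habs_fiber : ∀ N : ℕ, ∑ p ∈ Finset.HasAntidiagonal.antidiagonal N, |F p|
      = |aa lam y (N + 1)| * ∑ n ∈ Finset.range (N + 1), (j : ℝ) ^ n := by
    intro N
    rw [← fiber_sum (fun M => |aa lam y M|) j N]
    exact Finset.sum_congr rfl fun p _ => hFabs p
  have hbound : Summable (fun N : ℕ =>
      |aa lam y (N + 1)| * ∑ n ∈ Finset.range (N + 1), (j : ℝ) ^ n) := by
    have hw1 := workhorse_shift lam ((j : ℝ) * y) hj
    have hw2 := workhorse_shift lam y hy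
    apply Summable.of_nonneg_of_le _ _ (hw1.add hw2)
    · intro N
      exact mul_nonneg (abs_nonneg _) (Finset.sum_nonneg fun n _ => by positivity)
    · intro N
      have step1 : |aa lam y (N + 1)| * ∑ n ∈ Finset.range (N + 1), (j : ℝ) ^ n
          ≤ |aa lam y (N + 1)| * (((N : ℝ) + 1) * ((j : ℝ) ^ (N + 1) + 1)) :=
        mul_le_mul_of_nonneg_left (hgb N) (abs_nonneg _)
      refine step1.trans ?_
      have e1 : |(j : ℝ) * y| = (j : ℝ) * |y| := by rw [abs_mul, Nat.abs_cast]
      rw [abs_aa, e1, mul_pow]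
      have h0 : (0 : ℝ) < (N + 1).factorial := by positivity
      rw [div_mul_eq_mul_div, ← add_div]
      refine div_le_div_of_nonneg_right ?_ (le_of_lt h0)
      have hd : (0 : ℝ) ≤ |dff lam 1 (N + 1)| := abs_nonneg _
      have ht : (0 : ℝ) ≤ |y| ^ (N + 1) := by positivity
      have hu : (0 : ℝ) ≤ (j : ℝ) ^ (N + 1) := by positivity
      have hN : (0 : ℝ) ≤ (N : ℝ) := Nat.cast_nonneg N
      nlinarith [mul_nonneg (mul_nonneg hd ht) hu, mul_nonneg hd ht]
  have habs : Summable (fun p : ℕ × ℕ => |F p|) := by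
    rw [← Finset.HasAntidiagonal.sigmaAntidiagonalEquivProd.summable_iff]
    refine (summable_sigma_of_nonneg fun x => abs_nonneg _).mpr ⟨fun N => ?_, ?_⟩
    · exact Summable.of_finite
    · refine hbound.congr fun N => ?_
      rw [← habs_fiber N, ← Finset.tsum_subtype]
      rfl
  have hF : Summable F := habs.of_abs
  have hfiber : ∀ n : ℕ, HasSum (fun m => F (n, m)) ((j : ℝ) ^ n * dtail lam y n) :=
    fun n => (hasSum_dtail' lam y hy n).mul_left _
  have hgrand : HasSum (fun n : ℕ => (j : ℝ) ^ n * dtail lam y n) (∑' p, F p) :=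
    hF.hasSum.prod_fiberwise hfiber
  have hc := hasSum_c lam y j hj hy
  have hFe : Summable (F ∘ Finset.HasAntidiagonal.sigmaAntidiagonalEquivProd) :=
    Finset.HasAntidiagonal.sigmaAntidiagonalEquivProd.summable_iff.mpr hF
  have hval : ∑' p, F p
      = ∑' N : ℕ, (aa lam y (N + 1) * ∑ n ∈ Finset.range (N + 1), (j : ℝ) ^ n) := by
    rw [← Finset.HasAntidiagonal.sigmaAntidiagonalEquivProd.tsum_eq F]
    show ∑' c, (F ∘ ⇑Finset.HasAntidiagonal.sigmaAntidiagonalEquivProd) c = _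
    rw [Summable.tsum_sigma hFe]
    congr 1
    funext N
    have hfc : (fun c : (Finset.HasAntidiagonal.antidiagonal N : Finset (ℕ × ℕ)) =>
        (F ∘ ⇑Finset.HasAntidiagonal.sigmaAntidiagonalEquivProd) ⟨N, c⟩)
        = fun c : (Finset.HasAntidiagonal.antidiagonal N : Finset (ℕ × ℕ)) => F (c : ℕ × ℕ) := rfl
    rw [hfc, Finset.tsum_subtype]
    exact fiber_sum (aa lam y) j N
  rw [hval, hc.tsum_eq] at hgrand
  exact hgrand

theorem stmt_11 (k : ℕ) (lam y : ℝ) (hk : (k : ℝ) * |lam * y| < 1) (hy : |lam * y| < 1) :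
    HasSum (fun n : ℕ => stirling2 n k * dtail lam y n)
      ((1 / (k.factorial : ℝ)) * ∑ j ∈ Finset.range (k + 1),
        (k.choose j : ℝ) * (-1 : ℝ) ^ (k - j) *
          (if j = 1 then y / (1 + lam * y) * dexp lam y
           else (dexp lam (j * y) - dexp lam y) / ((j : ℝ) - 1))) := by
  have hterm : ∀ j ∈ Finset.range (k + 1),
      HasSum (fun n : ℕ =>
          (1 / (k.factorial : ℝ)) * ((-1 : ℝ) ^ (k - j) * (k.choose j : ℝ)) *
            ((j : ℝ) ^ n * dtail lam y n))
        ((1 / (k.factorial : ℝ)) * ((-1 : ℝ) ^ (k - j) * (k.choose j : ℝ)) *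
          (if j = 1 then y / (1 + lam * y) * dexp lam y
           else (dexp lam ((j : ℝ) * y) - dexp lam y) / ((j : ℝ) - 1))) := by
    intro j hj
    have hjk : (j : ℝ) ≤ (k : ℝ) := by
      exact_mod_cast Nat.lt_succ_iff.mp (Finset.mem_range.mp hj)
    have hjy : |lam * ((j : ℝ) * y)| < 1 := by
      have e1 : |lam * ((j : ℝ) * y)| = (j : ℝ) * |lam * y| := by
        rw [show lam * ((j : ℝ) * y) = (j : ℝ) * (lam * y) by ring, abs_mul, Nat.abs_cast]
      rw [e1]
      calc (j : ℝ) * |lam * y| ≤ (k : ℝ) * |lam * y| :=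
            mul_le_mul_of_nonneg_right hjk (abs_nonneg _)
        _ < 1 := hk
    exact (inner_hasSum lam y j hjy hy).mul_left _
  have hsum := hasSum_sum hterm
  have hfun : ∀ n : ℕ, ∑ j ∈ Finset.range (k + 1),
      (1 / (k.factorial : ℝ)) * ((-1 : ℝ) ^ (k - j) * (k.choose j : ℝ)) *
        ((j : ℝ) ^ n * dtail lam y n) = stirling2 n k * dtail lam y n := by
    intro n
    rw [stirling2, mul_assoc, Finset.sum_mul, Finset.mul_sum]
    apply Finset.sum_congr rfl
    intro j _
    ring
  have h2 := hsum.congr' hfun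
  convert h2 using 1
  rw [Finset.mul_sum]
  apply Finset.sum_congr rfl
  intro j _
  ring
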